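/- Let G = (U,E) be a finite directed graph (with E ⊆ U×Σ×U for some set Σ). There exists a finite set S of linear path schemes over G such that: (i) the set of Parikh images of paths of G equals the union over ρ ∈ S of the set of Parikh images of words in the language of ρ; (ii) every ρ ∈ S has length at most 2·|U|·|E|; and (iii) every ρ ∈ S has at most |E| cycles. -/

import Mathlib

set_option linter.unusedSectionVars false
set_option maxHeartbeats 1000000


namespace LabeledGraph

variable {ν α : Type} [DecidableEq ν] [DecidableEq α]

/-- `IsPathFrom p q π` : the word of edges `π` is a path from `p` to `q`. -/
def IsPathFrom : ν → ν → List (ν × α × ν) → Prop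
  | p, q, [] => p = q
  | p, q, e :: rest => e.1 = p ∧ IsPathFrom e.2.2 q rest

/-- The Parikh image of a word of edges. -/
def parikh (π : List (ν × α × ν)) : (ν × α × ν) → ℕ := fun e => π.count e

/-- A linear path scheme, presented as the initial segment `α₀` together with
the list of pairs `(βᵢ, αᵢ)`. -/
abbrev LPS (ν α : Type) := List (ν × α × ν) × List (List (ν × α × ν) × List (ν × α × ν))

/-- The underlying word `α₀ β₁ α₁ ⋯ β_k α_k` of a linear path scheme. -/
def lpsSupport (ρ : LPS ν α) : List (ν × α × ν) :=
  ρ.1 ++ (ρ.2.map fun s => s.1 ++ s.2).flatten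

/-- The length of a linear path scheme. -/
def lpsLen (ρ : LPS ν α) : ℕ := (lpsSupport ρ).length

/-- The number of cycles of a linear path scheme. -/
def numCycles (ρ : LPS ν α) : ℕ := ρ.2.length

/-- `ρ` is a linear path scheme from `p` to `q` over the edge set `E`. -/
def IsLPSFrom (E : Finset (ν × α × ν)) (p q : ν) (ρ : LPS ν α) : Prop :=
  (∀ e ∈ lpsSupport ρ, e ∈ E) ∧ IsPathFrom p q (lpsSupport ρ) ∧
    ∀ s ∈ ρ.2, s.1 ≠ [] ∧ ∃ r, IsPathFrom r r s.1

/-- The word `α₀ β₁^{e₁} α₁ ⋯ β_k^{e_k} α_k` of a linear path scheme. -/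
def lpsWord (ρ : LPS ν α) (e : List ℕ) : List (ν × α × ν) :=
  ρ.1 ++ (List.zipWith (fun s n => (List.replicate n s.1).flatten ++ s.2) ρ.2 e).flatten

/-- Membership in the language of a linear path scheme. -/
def InLang (ρ : LPS ν α) (π : List (ν × α × ν)) : Prop :=
  ∃ e : List ℕ, e.length = numCycles ρ ∧ π = lpsWord ρ e

variable {ν α : Type} [DecidableEq ν] [DecidableEq α]



abbrev Edge (ν α : Type) := ν × α × ν

lemma pathFrom_nil {p q : ν} : IsPathFrom (α := α) p q [] ↔ p = q := Iff.rfl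

lemma pathFrom_cons {p q : ν} {e : Edge ν α} {rest : List (Edge ν α)} :
    IsPathFrom p q (e :: rest) ↔ e.1 = p ∧ IsPathFrom e.2.2 q rest := Iff.rfl

lemma pathFrom_append {p q : ν} {xs ys : List (Edge ν α)} :
    IsPathFrom p q (xs ++ ys) ↔ ∃ v, IsPathFrom p v xs ∧ IsPathFrom v q ys := by
  induction xs generalizing p with
  | nil =>
    simp only [List.nil_append]
    constructor
    · intro h; exact ⟨p, rfl, h⟩
    · rintro ⟨v, hv, h⟩; cases hv; exact h
  | cons e t ih =>
    simp only [List.cons_append, pathFrom_cons, ih]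
    tauto

lemma pathFrom_unique {p q q' : ν} {π : List (Edge ν α)} :
    IsPathFrom p q π → IsPathFrom p q' π → q = q' := by
  induction π generalizing p with
  | nil => intro h h'; cases h; cases h'; rfl
  | cons e t ih => rintro ⟨-, h⟩ ⟨-, h'⟩; exact ih h h'

lemma pathFrom_concat_end {p v : ν} {zs : List (Edge ν α)} {e : Edge ν α}
    (h : IsPathFrom p v (zs ++ [e])) : v = e.2.2 := by
  rcases pathFrom_append.1 h with ⟨w, -, hw⟩
  rcases hw with ⟨-, h2⟩
  exact h2.symm

/-- insert a cycle in the middle of a path -/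
lemma pathFrom_insert {p q v : ν} {xs ys c : List (Edge ν α)}
    (h1 : IsPathFrom p v xs) (hc : IsPathFrom v v c) (h2 : IsPathFrom v q ys) :
    IsPathFrom p q (xs ++ c ++ ys) := by
  rw [List.append_assoc]
  exact pathFrom_append.2 ⟨v, h1, pathFrom_append.2 ⟨v, hc, h2⟩⟩

lemma pathFrom_replicate {v : ν} {c : List (Edge ν α)} (hc : IsPathFrom v v c) :
    ∀ n, IsPathFrom v v (List.replicate n c).flatten := by
  intro n
  induction n with
  | zero => rfl
  | succ n ih =>
    rw [List.replicate_succ, List.flatten_cons]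
    exact pathFrom_append.2 ⟨v, hc, ih⟩

lemma parikh_append (xs ys : List (Edge ν α)) :
    parikh (xs ++ ys) = fun e => parikh xs e + parikh ys e := by
  funext e; simp [parikh, List.count_append]

lemma parikh_flatten_replicate (n : ℕ) (c : List (Edge ν α)) (e : Edge ν α) :
    parikh (List.replicate n c).flatten e = n * parikh c e := by
  induction n with
  | zero => simp [parikh]
  | succ n ih =>
    rw [List.replicate_succ, List.flatten_cons]
    simp only [parikh, List.count_append] at *
    rw [ih]; ring



/-- if `x` occurs as target of an edge of a path `w` from `x`, then a nonempty prefix of `w`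
is a cycle at `x`. -/
lemma exists_cycle_prefix {x y : ν} {w : List (Edge ν α)} (hw : IsPathFrom x y w)
    {e' : Edge ν α} (he' : e' ∈ w) (hx : e'.2.2 = x) :
    ∃ c w₂, w = c ++ w₂ ∧ c ≠ [] ∧ IsPathFrom x x c := by
  rcases List.append_of_mem he' with ⟨u, t, rfl⟩
  refine ⟨u ++ [e'], t, by simp, by simp, ?_⟩
  have : IsPathFrom x y ((u ++ [e']) ++ t) := by simpa using hw
  rcases pathFrom_append.1 this with ⟨v, h1, -⟩
  have := pathFrom_concat_end h1
  rwa [this, hx] at h1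

/-- trimming a path to one with no repeated trace vertex -/
lemma exists_nodup_trace_path {x y : ν} {w : List (Edge ν α)} (hw : IsPathFrom x y w) :
    ∃ w', IsPathFrom x y w' ∧ (∀ e, w'.count e ≤ w.count e) ∧
      (x :: w'.map (fun e => e.2.2)).Nodup := by
  suffices H : ∀ n (w : List (Edge ν α)) (x : ν), w.length ≤ n → IsPathFrom x y w →
      ∃ w', IsPathFrom x y w' ∧ (∀ e, w'.count e ≤ w.count e) ∧
        (x :: w'.map (fun e => e.2.2)).Nodup from H w.length w x le_rfl hw
  clear hw w x
  intro n
  induction n with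
  | zero =>
    intro w x hn hw
    rw [Nat.le_zero, List.length_eq_zero_iff] at hn; subst hn
    exact ⟨[], hw, fun e => le_rfl, by simp⟩
  | succ n ih =>
  intro w x hn hw
  by_cases hrep : ∃ e' ∈ w, e'.2.2 = x
  · rcases hrep with ⟨e', he', hx⟩
    rcases exists_cycle_prefix hw he' hx with ⟨c, w₂, rfl, hc0, hcyc⟩
    rcases pathFrom_append.1 hw with ⟨v, h1, h2⟩
    have hv : v = x := pathFrom_unique h1 hcyc
    rw [hv] at h2
    have hlt : w₂.length ≤ n := by
      have hc1 : 1 ≤ c.length :=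
        Nat.pos_of_ne_zero (fun h => hc0 (List.eq_nil_of_length_eq_zero h))
      have := (List.length_append : (c ++ w₂).length = _)
      omega
    rcases ih w₂ x hlt h2 with ⟨w', hw', hcount, hnd⟩
    exact ⟨w', hw', fun e => le_trans (hcount e) (by simp [List.count_append]), hnd⟩
  · push_neg at hrep
    cases w with
    | nil => exact ⟨[], hw, fun e => le_rfl, by simp⟩
    | cons e w₁ =>
      obtain ⟨hex, hp1⟩ := hw
      rcases ih w₁ e.2.2 (by simpa using Nat.le_of_succ_le_succ hn) hp1 with ⟨w₁', hw₁', hcount, hnd⟩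
      refine ⟨e :: w₁', ⟨hex, hw₁'⟩, ?_, ?_⟩
      · intro f
        have := hcount f
        simp only [List.count_cons]
        omega
      · simp only [List.map_cons, List.nodup_cons] at hnd ⊢
        refine ⟨?_, hnd⟩
        simp only [List.mem_cons, not_or]
        constructor
        · exact fun h => hrep e (by simp) h.symm
        · intro hx
          rcases List.mem_map.1 hx with ⟨e', he', hx'⟩
          have : e' ∈ w₁ := by
            have h1 : 1 ≤ w₁'.count e' := List.count_pos_iff.2 he'
            have := hcount e'
            exact List.count_pos_iff.1 (lt_of_lt_of_le h1 this)
          exact hrep e' (by simp [this]) hx'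

/-- length bound from nodup trace -/
lemma length_le_of_nodup_mem {l : List ν} (U : Finset ν) (hU : ∀ v ∈ l, v ∈ U)
    (hnd : l.Nodup) : l.length ≤ U.card := by
  classical
  have : l.toFinset ⊆ U := fun v hv => hU v (List.mem_toFinset.1 hv)
  calc l.length = l.toFinset.card := (List.toFinset_card_of_nodup hnd).symm
  _ ≤ U.card := Finset.card_le_card this

/-- duplicate under a map gives a split -/
lemma exists_dup_split_map {β : Type} [DecidableEq β] (f : Edge ν α → β)
    {l : List (Edge ν α)} (h : ¬ (l.map f).Nodup) :
    ∃ l₁ a l₂ b l₃, l = l₁ ++ a :: l₂ ++ b :: l₃ ∧ f a = f b := by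
  induction l with
  | nil => simp at h
  | cons x t ih =>
    rw [List.map_cons, List.nodup_cons] at h
    by_cases hx : f x ∈ t.map f
    · rcases List.mem_map.1 hx with ⟨b, hb, hfb⟩
      rcases List.append_of_mem hb with ⟨l₂, l₃, rfl⟩
      exact ⟨[], x, l₂, b, l₃, by simp, hfb.symm⟩
    · have : ¬ (t.map f).Nodup := fun hn => h ⟨hx, hn⟩
      rcases ih this with ⟨l₁, a, l₂, b, l₃, rfl, hab⟩
      exact ⟨x :: l₁, a, l₂, b, l₃, by simp, hab⟩

/-- extract a cycle with pairwise distinct sources from any nonempty cycle -/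
lemma exists_simple_cycle {r : ν} {c : List (Edge ν α)} (hc : IsPathFrom r r c)
    (hc0 : c ≠ []) :
    ∃ r' c', IsPathFrom r' r' c' ∧ c' ≠ [] ∧ (∀ e ∈ c', e ∈ c) ∧
      (c'.map (fun e => e.1)).Nodup := by
  suffices H : ∀ n (c : List (Edge ν α)) (r : ν), c.length ≤ n → IsPathFrom r r c →
      c ≠ [] → ∃ r' c', IsPathFrom r' r' c' ∧ c' ≠ [] ∧ (∀ e ∈ c', e ∈ c) ∧
      (c'.map (fun e => e.1)).Nodup from H c.length c r le_rfl hc hc0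
  clear hc hc0 c r
  intro n
  induction n with
  | zero =>
    intro c r hn hc hc0
    rw [Nat.le_zero, List.length_eq_zero_iff] at hn; exact absurd hn hc0
  | succ n ih =>
    intro c r hn hc hc0
    by_cases hnd : (c.map (fun e => e.1)).Nodup
    · exact ⟨r, c, hc, hc0, fun e he => he, hnd⟩
    · rcases exists_dup_split_map _ hnd with ⟨c₁, e₁, c₂, e₂, c₃, rfl, h12⟩
      have hre : IsPathFrom r r (c₁ ++ ((e₁ :: c₂) ++ (e₂ :: c₃))) := by
        simpa using hc
      rcases pathFrom_append.1 hre with ⟨v, h1, h2⟩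
      rcases pathFrom_append.1 h2 with ⟨w, h3, h4⟩
      have hv : e₁.1 = v := h3.1
      have hw : e₂.1 = w := h4.1
      have hvw : w = v := by rw [← hv, ← hw, h12]
      rw [hvw] at h3
      have hlen : (e₁ :: c₂).length ≤ n := by
        have := congrArg List.length (rfl :
          (c₁ ++ e₁ :: c₂ ++ e₂ :: c₃) = (c₁ ++ e₁ :: c₂ ++ e₂ :: c₃))
        simp only [List.length_append, List.length_cons] at hn ⊢
        omega
      rcases ih (e₁ :: c₂) v hlen h3 (by simp) with ⟨r', c', hcyc, h0, hsub, hnd'⟩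
      refine ⟨r', c', hcyc, h0, fun e he => ?_, hnd'⟩
      have := hsub e he
      simp only [List.mem_append, List.mem_cons] at this ⊢
      tauto

/-- a path whose trace has a duplicate contains a cycle -/
lemma cycle_of_dup_trace {v y : ν} {w : List (Edge ν α)} (hw : IsPathFrom v y w)
    (hnd : ¬ (v :: w.map (fun e => e.2.2)).Nodup) :
    ∃ x c, c ≠ [] ∧ IsPathFrom x x c ∧ ∀ e ∈ c, e ∈ w := by
  induction w generalizing v with
  | nil => simp at hnd
  | cons e w₁ ih =>
    rw [List.nodup_cons] at hnd
    by_cases hv : v ∈ (e :: w₁).map (fun e => e.2.2)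
    · rcases List.mem_map.1 hv with ⟨e', he', hx⟩
      rcases exists_cycle_prefix hw he' hx with ⟨c, w₂, hsplit, hc0, hcyc⟩
      exact ⟨v, c, hc0, hcyc, fun f hf => by rw [hsplit]; exact List.mem_append_left _ hf⟩
    · have hnd' : ¬ (e.2.2 :: w₁.map (fun e => e.2.2)).Nodup := by
        intro h; exact hnd ⟨by simpa using hv, by simpa using h⟩
      rcases ih hw.2 hnd' with ⟨x, c, hc0, hcyc, hsub⟩
      exact ⟨x, c, hc0, hcyc, fun f hf => List.mem_cons_of_mem _ (hsub f hf)⟩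

def flowOut (D : Finset (Edge ν α)) (f : Edge ν α → ℕ) (v : ν) : ℕ :=
  ∑ e ∈ D.filter (fun e => e.1 = v), f e
def flowIn (D : Finset (Edge ν α)) (f : Edge ν α → ℕ) (v : ν) : ℕ :=
  ∑ e ∈ D.filter (fun e => e.2.2 = v), f e

lemma flowOut_add (D : Finset (Edge ν α)) (f g : Edge ν α → ℕ) (v : ν) :
    flowOut D (fun e => f e + g e) v = flowOut D f v + flowOut D g v :=
  Finset.sum_add_distrib
lemma flowIn_add (D : Finset (Edge ν α)) (f g : Edge ν α → ℕ) (v : ν) :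
    flowIn D (fun e => f e + g e) v = flowIn D f v + flowIn D g v :=
  Finset.sum_add_distrib
lemma flowOut_smul (D : Finset (Edge ν α)) (m : ℕ) (f : Edge ν α → ℕ) (v : ν) :
    flowOut D (fun e => m * f e) v = m * flowOut D f v := (Finset.mul_sum _ _ _).symm
lemma flowIn_smul (D : Finset (Edge ν α)) (m : ℕ) (f : Edge ν α → ℕ) (v : ν) :
    flowIn D (fun e => m * f e) v = m * flowIn D f v := (Finset.mul_sum _ _ _).symm

lemma flowOut_single (D : Finset (Edge ν α)) (e : Edge ν α) (he : e ∈ D) (v : ν) :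
    flowOut D (fun x => if e = x then 1 else 0) v = if e.1 = v then 1 else 0 := by
  unfold flowOut
  rw [Finset.sum_ite_eq]
  simp [Finset.mem_filter, he]

lemma flowIn_single (D : Finset (Edge ν α)) (e : Edge ν α) (he : e ∈ D) (v : ν) :
    flowIn D (fun x => if e = x then 1 else 0) v = if e.2.2 = v then 1 else 0 := by
  unfold flowIn
  rw [Finset.sum_ite_eq]
  simp [Finset.mem_filter, he]

lemma parikh_cons (e : Edge ν α) (π : List (Edge ν α)) :
    parikh (e :: π) = fun x => parikh π x + if e = x then 1 else 0 := by
  funext x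
  simp [parikh, List.count_cons]

lemma flow_path {D : Finset (Edge ν α)} :
    ∀ {π : List (Edge ν α)} {p q : ν}, (∀ e ∈ π, e ∈ D) → IsPathFrom p q π → ∀ v,
      flowOut D (parikh π) v + (if q = v then 1 else 0)
        = flowIn D (parikh π) v + (if p = v then 1 else 0) := by
  intro π
  induction π with
  | nil =>
    intro p q _ hpq v
    cases hpq
    simp [parikh, flowOut, flowIn]
  | cons e rest ih =>
    intro p q hD hp v
    obtain ⟨hep, hrest⟩ := hp
    have heD : e ∈ D := hD e (by simp)
    have ihv := ih (fun x hx => hD x (List.mem_cons_of_mem _ hx)) hrest v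
    rw [parikh_cons, flowOut_add, flowIn_add, flowOut_single D e heD,
      flowIn_single D e heD, hep]
    rw [add_right_comm, ihv, add_right_comm]

/-- cycles give circulations -/
lemma flow_cycle {D : Finset (Edge ν α)} {c : List (Edge ν α)} {r : ν}
    (hD : ∀ e ∈ c, e ∈ D) (hc : IsPathFrom r r c) (v : ν) :
    flowOut D (parikh c) v = flowIn D (parikh c) v := by
  have := flow_path hD hc v
  omega


section
variable {ν α : Type} [DecidableEq ν] [DecidableEq α]

lemma count_le_one_of_nodup {l : List (Edge ν α)} (h : l.Nodup) :
    ∀ e : Edge ν α, l.count e ≤ 1 := by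
  induction l with
  | nil => simp
  | cons a t ih =>
    rw [List.nodup_cons] at h
    intro e
    rw [List.count_cons]
    by_cases hea : a = e
    · subst hea
      rw [List.count_eq_zero_of_not_mem h.1]
      simp
    · simp [hea, ih h.2 e]

/-- walks of arbitrary length inside the support of a circulation -/
lemma exists_walk (D : Finset (Edge ν α)) (f : Edge ν α → ℕ)
    (hcirc : ∀ v, flowOut D f v = flowIn D f v) :
    ∀ (n : ℕ) (v : ν), (∃ e ∈ D, e.1 = v ∧ 0 < f e) →
      ∃ w y, IsPathFrom v y w ∧ w.length = n ∧ ∀ e ∈ w, e ∈ D ∧ 0 < f e := by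
  intro n
  induction n with
  | zero => intro v _; exact ⟨[], v, rfl, rfl, by simp⟩
  | succ n ih =>
    rintro v ⟨e, heD, hev, hef⟩
    have hin : 0 < flowIn D f e.2.2 := by
      apply lt_of_lt_of_le hef
      apply Finset.single_le_sum (f := f) (fun i _ => Nat.zero_le _)
      simp [Finset.mem_filter, heD]
    have hout : 0 < flowOut D f e.2.2 := by rw [hcirc]; exact hin
    obtain ⟨e', he', hfe'⟩ : ∃ e' ∈ D.filter (fun x => x.1 = e.2.2), 0 < f e' := by
      by_contra hcon
      push_neg at hcon
      have : flowOut D f e.2.2 = 0 :=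
        Finset.sum_eq_zero (fun x hx => Nat.eq_zero_of_le_zero (hcon x hx))
      omega
    rw [Finset.mem_filter] at he'
    rcases ih e.2.2 ⟨e', he'.1, he'.2, hfe'⟩ with ⟨w, y, hw, hlen, hmem⟩
    refine ⟨e :: w, y, ⟨hev, hw⟩, by simp [hlen], ?_⟩
    intro x hx
    rcases List.mem_cons.1 hx with h | h
    · subst h; exact ⟨heD, hef⟩
    · exact hmem x h

lemma exists_cycle_in_support (U : Finset ν) (D : Finset (Edge ν α))
    (hD : ∀ e ∈ D, e.1 ∈ U ∧ e.2.2 ∈ U)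
    (f : Edge ν α → ℕ) (hcirc : ∀ v, flowOut D f v = flowIn D f v)
    {e₀ : Edge ν α} (h₀ : e₀ ∈ D) (hf₀ : 0 < f e₀) :
    ∃ r c, IsPathFrom r r c ∧ c ≠ [] ∧ (∀ e ∈ c, e ∈ D ∧ 0 < f e) ∧
      c.Nodup ∧ c.length ≤ U.card := by
  obtain ⟨w, y, hw, hlen, hmem⟩ := exists_walk D f hcirc U.card e₀.1 ⟨e₀, h₀, rfl, hf₀⟩
  have htr : ¬ (e₀.1 :: w.map (fun e => e.2.2)).Nodup := by
    intro hnd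
    have hle := length_le_of_nodup_mem U ?_ hnd
    · simp [hlen] at hle
    · intro v hv
      rcases List.mem_cons.1 hv with h | h
      · subst h; exact (hD e₀ h₀).1
      · rcases List.mem_map.1 h with ⟨e, he, rfl⟩
        exact (hD e (hmem e he).1).2
  obtain ⟨x, c, hc0, hcyc, hsub⟩ := cycle_of_dup_trace hw htr
  obtain ⟨r, c', hcyc', hc0', hsub', hndsrc⟩ := exists_simple_cycle hcyc hc0
  have hc'mem : ∀ e ∈ c', e ∈ D ∧ 0 < f e := fun e he => hmem e (hsub e (hsub' e he))
  refine ⟨r, c', hcyc', hc0', hc'mem, hndsrc.of_map _, ?_⟩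
  calc c'.length = (c'.map (fun e => e.1)).length := by simp
  _ ≤ U.card := length_le_of_nodup_mem U (fun v hv => by
      rcases List.mem_map.1 hv with ⟨e, he, rfl⟩
      exact (hD e (hc'mem e he).1).1) hndsrc

lemma circulation_decomposition (U : Finset ν) (D : Finset (Edge ν α))
    (hD : ∀ e ∈ D, e.1 ∈ U ∧ e.2.2 ∈ U) :
    ∀ (k : ℕ) (f : Edge ν α → ℕ), (D.filter (fun e => 0 < f e)).card ≤ k →
    (∀ e, 0 < f e → e ∈ D) → (∀ v, flowOut D f v = flowIn D f v) →
    ∃ cs : List (List (Edge ν α) × ℕ),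
      (∀ e, f e = (cs.map (fun s => s.2 * s.1.count e)).sum) ∧
      cs.length ≤ (D.filter (fun e => 0 < f e)).card ∧
      ∀ s ∈ cs, s.1 ≠ [] ∧ (∃ r, IsPathFrom r r s.1) ∧ s.1.length ≤ U.card ∧
        1 ≤ s.2 ∧ ∀ e ∈ s.1, 0 < f e := by
  intro k
  induction k with
  | zero =>
    intro f hcard hsupp hcirc
    refine ⟨[], fun e => ?_, by simp, by simp⟩
    by_contra h0
    have hpos : 0 < f e := by simpa using Nat.pos_of_ne_zero (by simpa using h0)
    have hmem : e ∈ D.filter (fun e => 0 < f e) := Finset.mem_filter.2 ⟨hsupp e hpos, hpos⟩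
    have hcard0 : (D.filter (fun e => 0 < f e)).card = 0 := Nat.le_zero.1 hcard
    rw [Finset.card_eq_zero] at hcard0
    rw [hcard0] at hmem
    simp at hmem
  | succ k ih =>
    intro f hcard hsupp hcirc
    by_cases hzero : ∀ e ∈ D, f e = 0
    · refine ⟨[], fun e => ?_, by simp, by simp⟩
      by_contra h0
      have hpos : 0 < f e := Nat.pos_of_ne_zero (by simpa using h0)
      have := hzero e (hsupp e hpos)
      omega
    · push_neg at hzero
      obtain ⟨e₀, h₀D, h₀⟩ := hzero
      have hf₀ : 0 < f e₀ := Nat.pos_of_ne_zero h₀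
      obtain ⟨r, c, hcyc, hc0, hcm, hnd, hclen⟩ :=
        exists_cycle_in_support U D hD f hcirc h₀D hf₀
      -- minimal value on the cycle
      obtain ⟨estar, hestar, hmin⟩ := Finset.exists_min_image c.toFinset f
        (by rcases List.exists_mem_of_ne_nil c hc0 with ⟨e, he⟩
            exact ⟨e, List.mem_toFinset.2 he⟩)
      rw [List.mem_toFinset] at hestar
      set m := f estar with hm
      have hmpos : 0 < m := (hcm estar hestar).2
      have hcount_le : ∀ e, c.count e ≤ 1 := count_le_one_of_nodup hnd
      have hle : ∀ e, m * c.count e ≤ f e := by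
        intro e
        by_cases he : e ∈ c
        · have h1 : c.count e ≤ 1 := hcount_le e
          have := hmin e (List.mem_toFinset.2 he)
          calc m * c.count e ≤ m * 1 := Nat.mul_le_mul_left m h1
          _ = m := Nat.mul_one m
          _ ≤ f e := this
        · simp [List.count_eq_zero_of_not_mem he]
      set f' := fun e => f e - m * c.count e with hf'
      have hdecomp : ∀ e, f e = f' e + m * c.count e :=
        fun e => (Nat.sub_add_cancel (hle e)).symm
      have hf'le : ∀ e, f' e ≤ f e := fun e => Nat.sub_le _ _
      -- circulation of f'
      have hsplit : ∀ v, flowOut D f v = flowOut D f' v + m * flowOut D (parikh c) v := by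
        intro v
        have : f = fun e => f' e + m * parikh c e := by
          funext e; exact hdecomp e
        rw [this, flowOut_add]
        congr 1
        exact flowOut_smul D m (parikh c) v
      have hsplit' : ∀ v, flowIn D f v = flowIn D f' v + m * flowIn D (parikh c) v := by
        intro v
        have : f = fun e => f' e + m * parikh c e := by
          funext e; exact hdecomp e
        rw [this, flowIn_add]
        congr 1
        exact flowIn_smul D m (parikh c) v
      have hcircc := flow_cycle (fun e he => (hcm e he).1) hcyc
      have hcirc' : ∀ v, flowOut D f' v = flowIn D f' v := by
        intro v
        have h2 := hsplit' v
        have h3 := hcirc v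
        have h1' : flowOut D f v = flowOut D f' v + m * flowIn D (parikh c) v := by
          rw [hsplit v, hcircc v]
        omega
      -- support strictly decreases
      have hss : D.filter (fun e => 0 < f' e) ⊂ D.filter (fun e => 0 < f e) := by
        constructor
        · intro e he
          rw [Finset.mem_filter] at he ⊢
          exact ⟨he.1, lt_of_lt_of_le he.2 (hf'le e)⟩
        · intro hsub2
          have hestar_in : estar ∈ D.filter (fun e => 0 < f e) :=
            Finset.mem_filter.2 ⟨(hcm estar hestar).1, (hcm estar hestar).2⟩
          have : estar ∈ D.filter (fun e => 0 < f' e) := hsub2 hestar_in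
          rw [Finset.mem_filter] at this
          have hcnt1 : c.count estar = 1 :=
            le_antisymm (hcount_le estar) (List.count_pos_iff.2 hestar)
          have : 0 < f' estar := this.2
          rw [hf'] at this
          simp only [hcnt1, Nat.mul_one] at this
          omega
      have hcard' : (D.filter (fun e => 0 < f' e)).card ≤ k := by
        have := Finset.card_lt_card hss
        omega
      obtain ⟨cs', hsum', hlen', hprop'⟩ := ih f' hcard'
        (fun e he => hsupp e (lt_of_lt_of_le he (hf'le e))) hcirc'
      refine ⟨(c, m) :: cs', ?_, ?_, ?_⟩
      · intro e
        have := hsum' e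
        simp only [List.map_cons, List.sum_cons]
        rw [hdecomp e, this]
        omega
      · have := Finset.card_lt_card hss
        simp only [List.length_cons]
        omega
      · rintro s hs
        rcases List.mem_cons.1 hs with h | h
        · subst h
          exact ⟨hc0, ⟨r, hcyc⟩, hclen, hmpos, fun e he => (hcm e he).2⟩
        · obtain ⟨h1, h2, h3, h4, h5⟩ := hprop' s h
          exact ⟨h1, h2, h3, h4, fun e he => lt_of_lt_of_le (h5 e he) (hf'le e)⟩
end

section
variable {ν α : Type} [DecidableEq ν] [DecidableEq α]

lemma exists_prefix_split (S : Finset (Edge ν α)) (π : List (Edge ν α)) :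
    ∃ R π', π = R ++ π' ∧ (∀ e ∈ R, e ∈ S) ∧
      (π' = [] ∨ ∃ e t, π' = e :: t ∧ e ∉ S) := by
  induction π with
  | nil => exact ⟨[], [], rfl, by simp, Or.inl rfl⟩
  | cons e t ih =>
    by_cases he : e ∈ S
    · rcases ih with ⟨R, π', rfl, hR, hπ'⟩
      exact ⟨e :: R, π', rfl, by
        intro x hx
        rcases List.mem_cons.1 hx with h | h
        · subst h; exact he
        · exact hR x h, hπ'⟩
    · exact ⟨[], e :: t, rfl, by simp, Or.inr ⟨e, t, rfl, he⟩⟩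

lemma trimmed_length {U : Finset ν} (hU : 1 ≤ U.card) {p v : ν} {R' : List (Edge ν α)}
    (hpath : IsPathFrom p v R') (hnd : (p :: R'.map (fun e => e.2.2)).Nodup)
    (hmem : ∀ e ∈ R', e.1 ∈ U ∧ e.2.2 ∈ U) : R'.length + 1 ≤ U.card := by
  cases R' with
  | nil => simpa using hU
  | cons f t =>
    have hp : p ∈ U := by
      have := (hmem f (by simp)).1
      rwa [hpath.1] at this
    have := length_le_of_nodup_mem U (l := p :: (f :: t).map (fun e => e.2.2)) ?_ hnd
    · simpa using this
    · intro x hx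
      rcases List.mem_cons.1 hx with h | h
      · subst h; exact hp
      · rcases List.mem_map.1 h with ⟨e, he, rfl⟩
        exact (hmem e he).2

lemma exists_skeleton_rec (U : Finset ν) (hU : 1 ≤ U.card) :
    ∀ (n : ℕ) (π : List (Edge ν α)) (p q : ν) (S : Finset (Edge ν α)), π.length ≤ n →
    IsPathFrom p q π → (∀ e ∈ π, e.1 ∈ U ∧ e.2.2 ∈ U) →
    ∃ π₀ : List (Edge ν α), IsPathFrom p q π₀ ∧ (∀ e, π₀.count e ≤ π.count e) ∧
      (∀ e ∈ π, e ∈ S ∨ e ∈ π₀) ∧ (∀ e ∈ π₀, e ∈ π) ∧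
      π₀.length + 1 ≤ U.card * ((π.toFinset \ S).card + 1) := by
  intro n
  induction n with
  | zero =>
    intro π p q S hn hπ hm
    rw [Nat.le_zero, List.length_eq_zero_iff] at hn
    subst hn
    exact ⟨[], hπ, fun e => le_rfl, by simp, by simp, by
      have : 1 ≤ U.card * 1 := by omega
      calc (0:ℕ) + 1 = 1 := rfl
      _ ≤ U.card * 1 := this
      _ ≤ _ := Nat.mul_le_mul_left _ (by omega)⟩
  | succ n ih =>
    intro π p q S hn hπ hm
    obtain ⟨R, π', rfl, hR, hsplit⟩ := exists_prefix_split S π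
    obtain ⟨v, hpv, hvq⟩ := pathFrom_append.1 hπ
    obtain ⟨R', hR', hRcount, hRnd⟩ := exists_nodup_trace_path hpv
    have hR'mem : ∀ e ∈ R', e ∈ R := by
      intro e he
      have h1 : 1 ≤ R'.count e := List.count_pos_iff.2 he
      exact List.count_pos_iff.1 (lt_of_lt_of_le h1 (hRcount e))
    have hR'len : R'.length + 1 ≤ U.card :=
      trimmed_length hU hR' hRnd (fun e he => hm e (by
        simp only [List.mem_append]; exact Or.inl (hR'mem e he)))
    rcases hsplit with rfl | ⟨e, t, rfl, heS⟩
    · -- π = R, all in S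
      have hvq' : v = q := hvq
      subst hvq'
      refine ⟨R', by simpa using hR', ?_, ?_, ?_, ?_⟩
      · intro x
        simpa using hRcount x
      · intro x hx
        exact Or.inl (hR x (by simpa using hx))
      · intro x hx
        simp only [List.mem_append]
        exact Or.inl (hR'mem x hx)
      · calc R'.length + 1 ≤ U.card := hR'len
        _ = U.card * 1 := (Nat.mul_one _).symm
        _ ≤ _ := Nat.mul_le_mul_left _ (by omega)
    · -- π = R ++ e :: t with e ∉ S
      obtain ⟨hev, het⟩ := hvq
      have htlen : t.length ≤ n := by
        have := hn
        simp only [List.length_append, List.length_cons] at this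
        omega
      obtain ⟨t₀, ht₀, htcount, htS, htmem, htlen₀⟩ :=
        ih t e.2.2 q (insert e S) htlen het (fun x hx => hm x (by
          simp only [List.mem_append, List.mem_cons]; exact Or.inr (Or.inr hx)))
      refine ⟨R' ++ e :: t₀, ?_, ?_, ?_, ?_, ?_⟩
      · exact pathFrom_append.2 ⟨v, hR', ⟨hev, ht₀⟩⟩
      · intro x
        simp only [List.count_append, List.count_cons]
        have h1 := hRcount x
        have h2 := htcount x
        omega
      · intro x hx
        simp only [List.mem_append, List.mem_cons] at hx
        rcases hx with h | h | h
        · exact Or.inl (hR x h)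
        · subst h; exact Or.inr (by simp)
        · rcases htS x h with h' | h'
          · rcases Finset.mem_insert.1 h' with h'' | h''
            · subst h''; exact Or.inr (by simp)
            · exact Or.inl h''
          · exact Or.inr (by simp [h'])
      · intro x hx
        simp only [List.mem_append, List.mem_cons] at hx ⊢
        rcases hx with h | h | h
        · exact Or.inl (hR'mem x h)
        · subst h; exact Or.inr (Or.inl rfl)
        · exact Or.inr (Or.inr (htmem x h))
      · -- length bound
        have hcard : (t.toFinset \ insert e S).card + 1 ≤ ((R ++ e :: t).toFinset \ S).card := by
          have hsub : t.toFinset \ insert e S ⊆ ((R ++ e :: t).toFinset \ S).erase e := by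
            intro x hx
            rw [Finset.mem_sdiff] at hx
            rw [Finset.mem_erase, Finset.mem_sdiff]
            have hxe : x ≠ e := fun h => hx.2 (by rw [h]; exact Finset.mem_insert_self e S)
            have hxS : x ∉ S := fun h => hx.2 (Finset.mem_insert_of_mem h)
            exact ⟨hxe, by
              rw [List.mem_toFinset] at hx ⊢
              simp only [List.mem_append, List.mem_cons]
              exact Or.inr (Or.inr hx.1), hxS⟩
          have he' : e ∈ (R ++ e :: t).toFinset \ S := by
            rw [Finset.mem_sdiff, List.mem_toFinset]
            exact ⟨by simp, heS⟩
          have h1 := Finset.card_le_card hsub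
          have h2 := Finset.card_erase_of_mem he'
          have h3 : 1 ≤ ((R ++ e :: t).toFinset \ S).card := Finset.card_pos.2 ⟨e, he'⟩
          omega
        calc (R' ++ e :: t₀).length + 1 = (R'.length + 1) + (t₀.length + 1) := by
              simp only [List.length_append, List.length_cons]; ring
        _ ≤ U.card + U.card * ((t.toFinset \ insert e S).card + 1) := by omega
        _ = U.card * ((t.toFinset \ insert e S).card + 1 + 1) := by ring
        _ ≤ U.card * (((R ++ e :: t).toFinset \ S).card + 1) :=
            Nat.mul_le_mul_left _ (by omega)

lemma exists_skeleton (U : Finset ν) {π : List (Edge ν α)} {p q : ν}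
    (hπ : IsPathFrom p q π) (hmem : ∀ e ∈ π, e.1 ∈ U ∧ e.2.2 ∈ U) :
    ∃ π₀ : List (Edge ν α), IsPathFrom p q π₀ ∧ (∀ e, π₀.count e ≤ π.count e) ∧
      π₀.toFinset = π.toFinset ∧ π₀.length ≤ U.card * π.toFinset.card := by
  cases π with
  | nil => exact ⟨[], hπ, fun e => le_rfl, rfl, by simp⟩
  | cons e t =>
    have hU : 1 ≤ U.card := Finset.card_pos.2 ⟨e.1, (hmem e (by simp)).1⟩
    obtain ⟨hep, het⟩ := hπ
    obtain ⟨t₀, ht₀, htcount, htS, htmem, htlen⟩ :=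
      exists_skeleton_rec U hU t.length t e.2.2 q {e} le_rfl het
        (fun x hx => hmem x (List.mem_cons_of_mem _ hx))
    refine ⟨e :: t₀, ⟨hep, ht₀⟩, ?_, ?_, ?_⟩
    · intro x
      simp only [List.count_cons]
      have := htcount x
      omega
    · apply Finset.Subset.antisymm
      · intro x hx
        rw [List.mem_toFinset] at hx ⊢
        rcases List.mem_cons.1 hx with h | h
        · simp [h]
        · exact List.mem_cons_of_mem _ (htmem x h)
      · intro x hx
        rw [List.mem_toFinset] at hx ⊢
        rcases List.mem_cons.1 hx with h | h
        · simp [h]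
        · rcases htS x h with h' | h'
          · simp [Finset.mem_singleton.1 h']
          · exact List.mem_cons_of_mem _ h'
    · have hcard : (t.toFinset \ {e}).card + 1 ≤ (e :: t).toFinset.card := by
        have hsub : t.toFinset \ {e} ⊆ (e :: t).toFinset.erase e := by
          intro x hx
          rw [Finset.mem_sdiff, Finset.mem_singleton] at hx
          rw [Finset.mem_erase]
          exact ⟨hx.2, by
            rw [List.mem_toFinset] at hx ⊢
            exact List.mem_cons_of_mem _ hx.1⟩
        have he' : e ∈ (e :: t).toFinset := by simp
        have h1 := Finset.card_le_card hsub
        have h2 := Finset.card_erase_of_mem he'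
        have h3 : 1 ≤ (e :: t).toFinset.card := Finset.card_pos.2 ⟨e, he'⟩
        omega
      calc (e :: t₀).length = t₀.length + 1 := by simp
      _ ≤ U.card * ((t.toFinset \ {e}).card + 1) := htlen
      _ ≤ U.card * (e :: t).toFinset.card := Nat.mul_le_mul_left _ hcard
end

section
variable {ν α : Type} [DecidableEq ν] [DecidableEq α]

def pairsSupport (l : List (List (Edge ν α) × List (Edge ν α))) : List (Edge ν α) :=
  (l.map fun s => s.1 ++ s.2).flatten
def pairsSkeleton (l : List (List (Edge ν α) × List (Edge ν α))) : List (Edge ν α) :=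
  (l.map fun s => s.2).flatten
def pairsWord (l : List (List (Edge ν α) × List (Edge ν α))) (es : List ℕ) : List (Edge ν α) :=
  (List.zipWith (fun s n => (List.replicate n s.1).flatten ++ s.2) l es).flatten

@[simp] lemma pairsSupport_nil : pairsSupport ([] : List (List (Edge ν α) × List (Edge ν α))) = [] := rfl
@[simp] lemma pairsSkeleton_nil : pairsSkeleton ([] : List (List (Edge ν α) × List (Edge ν α))) = [] := rfl
@[simp] lemma pairsWord_nil (es : List ℕ) : pairsWord ([] : List (List (Edge ν α) × List (Edge ν α))) es = [] := rfl
@[simp] lemma pairsSupport_cons (s) (l : List (List (Edge ν α) × List (Edge ν α))) :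
    pairsSupport (s :: l) = (s.1 ++ s.2) ++ pairsSupport l := rfl
@[simp] lemma pairsSkeleton_cons (s) (l : List (List (Edge ν α) × List (Edge ν α))) :
    pairsSkeleton (s :: l) = s.2 ++ pairsSkeleton l := rfl
@[simp] lemma pairsWord_cons (s) (l : List (List (Edge ν α) × List (Edge ν α))) (n : ℕ) (ns : List ℕ) :
    pairsWord (s :: l) (n :: ns) = ((List.replicate n s.1).flatten ++ s.2) ++ pairsWord l ns := rfl

lemma count_flatten_replicate (n : ℕ) (c : List (Edge ν α)) (x : Edge ν α) :
    ((List.replicate n c).flatten).count x = n * c.count x := by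
  induction n with
  | zero => simp
  | succ n ih =>
    rw [List.replicate_succ, List.flatten_cons, List.count_append, ih]
    ring

lemma rotate_cycle {r : ν} {γ : List (Edge ν α)} (hc : IsPathFrom r r γ) {e : Edge ν α}
    (he : e ∈ γ) :
    ∃ γ', IsPathFrom e.1 e.1 γ' ∧ γ' ≠ [] ∧ (∀ x, γ'.count x = γ.count x) ∧
      γ'.length = γ.length := by
  rcases List.append_of_mem he with ⟨u, t, rfl⟩
  obtain ⟨v, h1, h2⟩ := pathFrom_append.1 hc
  have hev : e.1 = v := h2.1
  refine ⟨(e :: t) ++ u, ?_, by simp, fun x => by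
    simp only [List.count_append, List.count_cons]; omega, by
    simp only [List.length_append, List.length_cons]; omega⟩
  rw [hev]
  exact pathFrom_append.2 ⟨r, h2, h1⟩

lemma mem_of_count_eq {l l' : List (Edge ν α)} (h : ∀ x, l'.count x = l.count x)
    {x : Edge ν α} (hx : x ∈ l') : x ∈ l := by
  have := List.count_pos_iff.2 hx
  rw [h] at this
  exact List.count_pos_iff.1 this

/-- insert a cycle `γ` (anchored via an edge `e` lying on the skeleton) into a pairs list. -/
lemma insert_cycle_pairs :
    ∀ (l : List (List (Edge ν α) × List (Edge ν α))) (es : List ℕ) (v q : ν),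
    es.length = l.length →
    IsPathFrom v q (pairsSupport l) →
    (∀ s ∈ l, s.1 ≠ [] ∧ ∃ r, IsPathFrom r r s.1) →
    ∀ {e : Edge ν α}, e ∈ pairsSkeleton l →
    ∀ {γ : List (Edge ν α)} {rγ : ν}, IsPathFrom rγ rγ γ → γ ≠ [] → e ∈ γ → ∀ (m : ℕ),
    ∃ l' es', es'.length = l'.length ∧ l'.length = l.length + 1 ∧
      IsPathFrom v q (pairsSupport l') ∧
      (∀ s ∈ l', s.1 ≠ [] ∧ ∃ r, IsPathFrom r r s.1) ∧
      pairsSkeleton l' = pairsSkeleton l ∧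
      (pairsSupport l').length = (pairsSupport l).length + γ.length ∧
      (∀ x, (pairsWord l' es').count x = (pairsWord l es).count x + m * γ.count x) ∧
      (∀ x ∈ pairsSupport l', x ∈ pairsSupport l ∨ x ∈ γ) := by
  intro l
  induction l with
  | nil => intro es v q hlen hpath hproper e he; simp [pairsSkeleton] at he
  | cons sp ls ih =>
    intro es v q hlen hpath hproper e he γ rγ hγ hγ0 heγ m
    cases es with
    | nil => simp at hlen
    | cons n ns =>
      simp only [List.length_cons, Nat.succ.injEq] at hlen
      rw [pairsSkeleton_cons, List.mem_append] at he
      by_cases hes : e ∈ sp.2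
      · -- insert here
        rcases List.append_of_mem hes with ⟨a, b, hs2⟩
        -- path decomposition
        rw [pairsSupport_cons] at hpath
        obtain ⟨x, hx1, hx2⟩ := pathFrom_append.1 hpath
        rw [hs2] at hx1
        have hx1' : IsPathFrom v x (sp.1 ++ (a ++ e :: b)) := hx1
        obtain ⟨v₁, hv₁, hab⟩ := pathFrom_append.1 hx1'
        obtain ⟨w, hw1, hw2⟩ := pathFrom_append.1 hab
        have hew : e.1 = w := hw2.1
        obtain ⟨γ', hγ', hγ'0, hγ'count, hγ'len⟩ := rotate_cycle hγ heγ
        rw [hew] at hγ'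
        refine ⟨(sp.1, a) :: (γ', e :: b) :: ls, n :: m :: ns, ?_, ?_, ?_, ?_, ?_, ?_, ?_, ?_⟩
        · simp [hlen]
        · simp
        · simp only [pairsSupport_cons]
          apply pathFrom_append.2 ⟨w, pathFrom_append.2 ⟨v₁, hv₁, hw1⟩, ?_⟩
          apply pathFrom_append.2 ⟨x, pathFrom_append.2 ⟨w, hγ', hw2⟩, hx2⟩
        · intro tt htt
          rcases List.mem_cons.1 htt with h | h
          · subst h; exact hproper sp (by simp)
          rcases List.mem_cons.1 h with h' | h'
          · subst h'; exact ⟨hγ'0, w, hγ'⟩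
          · exact hproper tt (List.mem_cons_of_mem _ h')
        · simp only [pairsSkeleton_cons, hs2]
          simp
        · simp only [pairsSupport_cons, hs2, List.length_append, List.length_cons, hγ'len]
          omega
        · intro y
          simp only [pairsWord_cons, List.count_append, count_flatten_replicate, hs2,
            List.count_cons, hγ'count y]
          omega
        · intro y hy
          have hrot : y ∈ γ' → y ∈ γ := fun h => mem_of_count_eq hγ'count h
          simp only [pairsSupport_cons, List.mem_append, List.mem_cons, hs2] at hy ⊢
          tauto
      · -- recurse
        have he' : e ∈ pairsSkeleton ls := by
          rcases he with h | h
          · exact absurd h hes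
          · exact h
        rw [pairsSupport_cons] at hpath
        obtain ⟨x, hx1, hx2⟩ := pathFrom_append.1 hpath
        obtain ⟨l', es', h1, h2, h3, h4, h5, h6, h7, h8⟩ :=
          ih ns x q hlen hx2 (fun t ht => hproper t (List.mem_cons_of_mem _ ht))
            he' hγ hγ0 heγ m
        refine ⟨sp :: l', n :: es', by simp [h1], by simp [h2], ?_, ?_, ?_, ?_, ?_, ?_⟩
        · rw [pairsSupport_cons]
          exact pathFrom_append.2 ⟨x, hx1, h3⟩
        · intro tt htt
          rcases List.mem_cons.1 htt with h | h
          · exact h ▸ hproper sp (by simp)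
          · exact h4 tt h
        · simp [h5]
        · simp only [pairsSupport_cons, List.length_append, h6]; ring
        · intro y
          simp only [pairsWord_cons, List.count_append, h7 y]
          omega
        · intro y hy
          simp only [pairsSupport_cons, List.mem_append] at hy ⊢
          rcases hy with h | h
          · exact Or.inl (Or.inl h)
          · rcases h8 y h with h' | h'
            · exact Or.inl (Or.inr h')
            · exact Or.inr h'
end

section
variable {ν α : Type} [DecidableEq ν] [DecidableEq α]

end
section
variable {ν α : Type} [DecidableEq ν] [DecidableEq α]

def skeleton (ρ : LPS ν α) : List (Edge ν α) := ρ.1 ++ pairsSkeleton ρ.2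

lemma lpsSupport_eq (ρ : LPS ν α) : lpsSupport ρ = ρ.1 ++ pairsSupport ρ.2 := rfl
lemma lpsWord_eq (ρ : LPS ν α) (es : List ℕ) : lpsWord ρ es = ρ.1 ++ pairsWord ρ.2 es := rfl

lemma insert_cycle_lps (ρ : LPS ν α) (es : List ℕ) (p q : ν)
    (hlen : es.length = ρ.2.length)
    (hpath : IsPathFrom p q (lpsSupport ρ))
    (hproper : ∀ s ∈ ρ.2, s.1 ≠ [] ∧ ∃ r, IsPathFrom r r s.1)
    {e : Edge ν α} (he : e ∈ skeleton ρ)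
    {γ : List (Edge ν α)} {rγ : ν} (hγ : IsPathFrom rγ rγ γ) (hγ0 : γ ≠ [])
    (heγ : e ∈ γ) (m : ℕ) :
    ∃ ρ' : LPS ν α, ∃ es' : List ℕ, es'.length = ρ'.2.length ∧
      ρ'.2.length = ρ.2.length + 1 ∧
      IsPathFrom p q (lpsSupport ρ') ∧
      (∀ s ∈ ρ'.2, s.1 ≠ [] ∧ ∃ r, IsPathFrom r r s.1) ∧
      skeleton ρ' = skeleton ρ ∧
      (lpsSupport ρ').length = (lpsSupport ρ).length + γ.length ∧
      (∀ x, (lpsWord ρ' es').count x = (lpsWord ρ es).count x + m * γ.count x) ∧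
      (∀ x ∈ lpsSupport ρ', x ∈ lpsSupport ρ ∨ x ∈ γ) := by
  rw [skeleton, List.mem_append] at he
  by_cases he1 : e ∈ ρ.1
  · rcases List.append_of_mem he1 with ⟨a, b, hab⟩
    have hsup : lpsSupport ρ = a ++ (e :: (b ++ pairsSupport ρ.2)) := by
      rw [lpsSupport_eq, hab]; simp
    rw [hsup] at hpath
    obtain ⟨w, ha, hw⟩ := pathFrom_append.1 hpath
    have hew : e.1 = w := hw.1
    obtain ⟨γ', hγ', hγ'0, hγ'count, hγ'len⟩ := rotate_cycle hγ heγ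
    rw [hew] at hγ'
    refine ⟨(a, (γ', e :: b) :: ρ.2), m :: es, by simp [hlen], by simp, ?_, ?_, ?_, ?_, ?_, ?_⟩
    · show IsPathFrom p q (a ++ pairsSupport ((γ', e :: b) :: ρ.2))
      rw [pairsSupport_cons]
      have : a ++ (γ' ++ (e :: b) ++ pairsSupport ρ.2)
          = a ++ (γ' ++ ((e :: b) ++ pairsSupport ρ.2)) := by simp
      rw [this]
      refine pathFrom_append.2 ⟨w, ha, pathFrom_append.2 ⟨w, hγ', ?_⟩⟩
      show IsPathFrom w q (e :: (b ++ pairsSupport ρ.2))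
      exact hw
    · intro tt htt
      rcases List.mem_cons.1 htt with h | h
      · exact h ▸ ⟨hγ'0, w, hγ'⟩
      · exact hproper tt h
    · show a ++ pairsSkeleton ((γ', e :: b) :: ρ.2) = skeleton ρ
      rw [pairsSkeleton_cons, skeleton, hab]
      simp
    · show (a ++ pairsSupport ((γ', e :: b) :: ρ.2)).length = _
      rw [pairsSupport_cons, lpsSupport_eq, hab]
      simp only [List.length_append, List.length_cons, hγ'len]
      omega
    · intro x
      show (a ++ pairsWord ((γ', e :: b) :: ρ.2) (m :: es)).count x = _
      rw [pairsWord_cons, lpsWord_eq, hab]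
      simp only [List.count_append, List.count_cons, count_flatten_replicate, hγ'count x]
      omega
    · intro x hx
      have hrot : x ∈ γ' → x ∈ γ := fun h => mem_of_count_eq hγ'count h
      have hx' : x ∈ a ++ pairsSupport ((γ', e :: b) :: ρ.2) := hx
      rw [pairsSupport_cons] at hx'
      rw [lpsSupport_eq, hab]
      simp only [List.mem_append, List.mem_cons] at hx' ⊢
      tauto
  · have he2 : e ∈ pairsSkeleton ρ.2 := by tauto
    rw [lpsSupport_eq] at hpath
    obtain ⟨v, h1, h2⟩ := pathFrom_append.1 hpath
    obtain ⟨l', es', g1, g2, g3, g4, g5, g6, g7, g8⟩ :=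
      insert_cycle_pairs ρ.2 es v q hlen h2 hproper he2 hγ hγ0 heγ m
    refine ⟨(ρ.1, l'), es', g1, g2, ?_, g4, ?_, ?_, ?_, ?_⟩
    · show IsPathFrom p q (ρ.1 ++ pairsSupport l')
      exact pathFrom_append.2 ⟨v, h1, g3⟩
    · show ρ.1 ++ pairsSkeleton l' = skeleton ρ
      rw [g5]; rfl
    · show (ρ.1 ++ pairsSupport l').length = _
      rw [lpsSupport_eq]
      simp only [List.length_append, g6]
      omega
    · intro x
      show (ρ.1 ++ pairsWord l' es').count x = _
      rw [lpsWord_eq]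
      simp only [List.count_append, g7 x]
      omega
    · intro x hx
      have hx' : x ∈ ρ.1 ++ pairsSupport l' := hx
      rw [lpsSupport_eq]
      simp only [List.mem_append] at hx' ⊢
      rcases hx' with h | h
      · exact Or.inl (Or.inl h)
      · rcases g8 x h with h' | h'
        · exact Or.inl (Or.inr h')
        · exact Or.inr h'

lemma build_lps (π₀ : List (Edge ν α)) (p q : ν) (hπ₀ : IsPathFrom p q π₀) :
    ∀ cs : List (List (Edge ν α) × ℕ),
    (∀ s ∈ cs, s.1 ≠ [] ∧ (∃ r, IsPathFrom r r s.1) ∧ ∃ e, e ∈ s.1 ∧ e ∈ π₀) →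
    ∃ ρ : LPS ν α, ∃ es : List ℕ,
      es.length = ρ.2.length ∧ ρ.2.length = cs.length ∧
      IsPathFrom p q (lpsSupport ρ) ∧
      (∀ s ∈ ρ.2, s.1 ≠ [] ∧ ∃ r, IsPathFrom r r s.1) ∧
      skeleton ρ = π₀ ∧
      (lpsSupport ρ).length = π₀.length + (cs.map (fun s => s.1.length)).sum ∧
      (∀ x, (lpsWord ρ es).count x
        = π₀.count x + (cs.map (fun s => s.2 * s.1.count x)).sum) ∧
      (∀ x ∈ lpsSupport ρ, x ∈ π₀ ∨ ∃ s ∈ cs, x ∈ s.1) := by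
  intro cs
  induction cs with
  | nil =>
    intro _
    refine ⟨(π₀, []), [], rfl, rfl, ?_, by simp, by simp [skeleton, pairsSkeleton], ?_, ?_, ?_⟩
    · show IsPathFrom p q (π₀ ++ pairsSupport [])
      simpa using hπ₀
    · show (π₀ ++ pairsSupport []).length = _
      simp
    · intro x
      show (π₀ ++ pairsWord [] []).count x = _
      simp
    · intro x hx
      have : x ∈ π₀ ++ pairsSupport [] := hx
      simp at this
      exact Or.inl this
  | cons c cs' ih =>
    intro hcs
    obtain ⟨ρ, es, h1, h2, h3, h4, h5, h6, h7, h8⟩ :=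
      ih (fun s hs => hcs s (List.mem_cons_of_mem _ hs))
    obtain ⟨hc0, ⟨r, hcyc⟩, e, heγ, heπ₀⟩ := hcs c (by simp)
    have he : e ∈ skeleton ρ := by rw [h5]; exact heπ₀
    obtain ⟨ρ', es', g1, g2, g3, g4, g5, g6, g7, g8⟩ :=
      insert_cycle_lps ρ es p q h1 h3 h4 he hcyc hc0 heγ c.2
    refine ⟨ρ', es', g1, by rw [g2, h2]; simp, g3, g4, by rw [g5, h5], ?_, ?_, ?_⟩
    · rw [g6, h6]
      simp only [List.map_cons, List.sum_cons]
      ring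
    · intro x
      rw [g7 x, h7 x]
      simp only [List.map_cons, List.sum_cons]
      ring
    · intro x hx
      rcases g8 x hx with h | h
      · rcases h8 x h with h' | ⟨s, hs, h'⟩
        · exact Or.inl h'
        · exact Or.inr ⟨s, List.mem_cons_of_mem _ hs, h'⟩
      · exact Or.inr ⟨c, by simp, h⟩

lemma pairs_word_path :
    ∀ (l : List (List (Edge ν α) × List (Edge ν α))) (es : List ℕ), es.length = l.length →
    ∀ {v q : ν}, IsPathFrom v q (pairsSupport l) →
    (∀ s ∈ l, s.1 ≠ [] ∧ ∃ r, IsPathFrom r r s.1) →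
    IsPathFrom v q (pairsWord l es) := by
  intro l
  induction l with
  | nil => intro es _ v q h _; simpa [pairsWord] using h
  | cons s ls ih =>
    intro es hlen v q hpath hproper
    cases es with
    | nil => simp at hlen
    | cons n ns =>
      simp only [List.length_cons, Nat.succ.injEq] at hlen
      rw [pairsSupport_cons] at hpath
      obtain ⟨x, hx1, hx2⟩ := pathFrom_append.1 hpath
      obtain ⟨w, hw1, hw2⟩ := pathFrom_append.1 hx1
      obtain ⟨hs0, rs, hrs⟩ := hproper s (by simp)
      -- the cycle s.1 starts at v, so rs = v and w = v
      have hrv : rs = v := by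
        cases hs1 : s.1 with
        | nil => exact absurd hs1 hs0
        | cons f t =>
          rw [hs1] at hw1 hrs
          rw [← hw1.1, ← hrs.1]
      rw [hrv] at hrs
      have hwv : w = v := pathFrom_unique hw1 hrs
      rw [hwv] at hw2
      rw [pairsWord_cons]
      refine pathFrom_append.2 ⟨x, pathFrom_append.2 ⟨v, ?_, hw2⟩, ?_⟩
      · exact pathFrom_replicate hrs n
      · exact ih ns hlen hx2 (fun t ht => hproper t (List.mem_cons_of_mem _ ht))

lemma lps_word_path {E : Finset (Edge ν α)} {p q : ν} {ρ : LPS ν α}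
    (h : IsLPSFrom E p q ρ) {es : List ℕ} (hlen : es.length = numCycles ρ) :
    IsPathFrom p q (lpsWord ρ es) := by
  obtain ⟨-, hpath, hproper⟩ := h
  rw [lpsSupport_eq] at hpath
  obtain ⟨v, h1, h2⟩ := pathFrom_append.1 hpath
  rw [lpsWord_eq]
  exact pathFrom_append.2 ⟨v, h1, pairs_word_path ρ.2 es hlen h2 hproper⟩

lemma mem_pairs_word :
    ∀ (l : List (List (Edge ν α) × List (Edge ν α))) (es : List ℕ) {x : Edge ν α},
    x ∈ pairsWord l es → x ∈ pairsSupport l := by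
  intro l
  induction l with
  | nil => intro es x hx; simpa [pairsWord] using hx
  | cons s ls ih =>
    intro es x hx
    cases es with
    | nil => simp [pairsWord] at hx
    | cons n ns =>
      rw [pairsWord_cons] at hx
      rw [pairsSupport_cons]
      simp only [List.mem_append] at hx ⊢
      rcases hx with (h | h) | h
      · have h1 : 0 < ((List.replicate n s.1).flatten).count x := List.count_pos_iff.2 h
        rw [count_flatten_replicate] at h1
        have h2 : 0 < s.1.count x := Nat.pos_of_ne_zero (by
          intro h0; rw [h0] at h1; simp at h1)
        exact Or.inl (Or.inl (List.count_pos_iff.1 h2))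
      · exact Or.inl (Or.inr h)
      · exact Or.inr (ih ns h)

lemma mem_lps_word {ρ : LPS ν α} {es : List ℕ} {x : Edge ν α}
    (hx : x ∈ lpsWord ρ es) : x ∈ lpsSupport ρ := by
  rw [lpsWord_eq] at hx
  rw [lpsSupport_eq]
  simp only [List.mem_append] at hx ⊢
  rcases hx with h | h
  · exact Or.inl h
  · exact Or.inr (mem_pairs_word ρ.2 es h)
end

section
variable {ν α : Type} [DecidableEq ν] [DecidableEq α]

lemma finite_bounded_lists {β : Type} {s : Set β} (hs : s.Finite) :
    ∀ n : ℕ, {l : List β | l.length ≤ n ∧ ∀ e ∈ l, e ∈ s}.Finite := by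
  intro n
  induction n with
  | zero =>
    apply Set.Finite.subset (Set.finite_singleton ([] : List β))
    rintro l ⟨hl, -⟩
    rw [Nat.le_zero, List.length_eq_zero_iff] at hl
    simp [hl]
  | succ n ih =>
    apply Set.Finite.subset ((Set.finite_singleton ([] : List β)).union
      (Set.Finite.image2 List.cons hs ih))
    rintro l ⟨hl, hmem⟩
    cases l with
    | nil => simp
    | cons x t =>
      right
      refine Set.mem_image2.2 ⟨x, hmem x (by simp), t, ⟨?_, fun e he => hmem e (by simp [he])⟩, rfl⟩
      simpa using hl

lemma mem_support_of_mem_pair {ρ : LPS ν α} {s : List (Edge ν α) × List (Edge ν α)}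
    (hs : s ∈ ρ.2) : ∀ e ∈ s.1 ++ s.2, e ∈ lpsSupport ρ := by
  intro e he
  rw [lpsSupport]
  rw [List.mem_append]
  right
  rw [List.mem_flatten]
  exact ⟨s.1 ++ s.2, List.mem_map.2 ⟨s, hs, rfl⟩, he⟩

lemma pair_len_le {ρ : LPS ν α} {s : List (Edge ν α) × List (Edge ν α)}
    (hs : s ∈ ρ.2) : (s.1 ++ s.2).length ≤ lpsLen ρ := by
  have h1 : (s.1 ++ s.2).length ∈ (ρ.2.map fun t => t.1 ++ t.2).map List.length := by
    rw [List.mem_map]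
    exact ⟨s.1 ++ s.2, List.mem_map.2 ⟨s, hs, rfl⟩, rfl⟩
  have h2 := List.single_le_sum (l := (ρ.2.map fun t => t.1 ++ t.2).map List.length)
    (fun x _ => Nat.zero_le x) _ h1
  calc (s.1 ++ s.2).length ≤ ((ρ.2.map fun t => t.1 ++ t.2).map List.length).sum := h2
  _ = (ρ.2.map fun t => t.1 ++ t.2).flatten.length := List.length_flatten.symm
  _ ≤ (lpsSupport ρ).length := by rw [lpsSupport, List.length_append]; omega
  _ = lpsLen ρ := rfl

lemma lps_set_finite (E : Finset (Edge ν α)) (N k : ℕ) :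
    {ρ : LPS ν α | (∀ e ∈ lpsSupport ρ, e ∈ E) ∧ lpsLen ρ ≤ N ∧ numCycles ρ ≤ k}.Finite := by
  have hA : {l : List (Edge ν α) | l.length ≤ N ∧ ∀ e ∈ l, e ∈ (E : Set (Edge ν α))}.Finite :=
    finite_bounded_lists E.finite_toSet N
  have hP : ({l : List (Edge ν α) | l.length ≤ N ∧ ∀ e ∈ l, e ∈ (E : Set (Edge ν α))} ×ˢ
      {l : List (Edge ν α) | l.length ≤ N ∧ ∀ e ∈ l, e ∈ (E : Set (Edge ν α))}).Finite :=
    hA.prod hA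
  have hB := finite_bounded_lists hP k
  apply Set.Finite.subset (hA.prod hB)
  rintro ρ ⟨hsup, hlen, hcyc⟩
  constructor
  · constructor
    · have : ρ.1.length ≤ (lpsSupport ρ).length := by
        rw [lpsSupport, List.length_append]; omega
      exact le_trans this hlen
    · intro e he
      exact hsup e (by rw [lpsSupport, List.mem_append]; exact Or.inl he)
  · refine ⟨hcyc, ?_⟩
    intro s hs
    have h1 := mem_support_of_mem_pair hs
    have h2 := pair_len_le hs
    rw [List.length_append] at h2
    refine ⟨⟨by omega, fun e he => hsup e (h1 e (by simp [he]))⟩,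
      ⟨by omega, fun e he => hsup e (h1 e (by simp [he]))⟩⟩
end

/-- Lemma on Parikh images. The Parikh images of paths of a
finite labeled graph `G = (U,E)` are exactly the Parikh images of words of a
finite set of linear path schemes of length at most `2·|U|·|E|` with at most
`|E|` cycles each. -/
theorem statement2 {ν α : Type} [DecidableEq ν] [DecidableEq α]
    (U : Finset ν) (E : Finset (ν × α × ν))
    (hE : ∀ e ∈ E, e.1 ∈ U ∧ e.2.2 ∈ U) :
    ∃ S : Finset (LPS ν α),
      (∀ ρ ∈ S, ∃ p q, IsLPSFrom E p q ρ) ∧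
      ({f : (ν × α × ν) → ℕ |
          ∃ π, (∀ e ∈ π, e ∈ E) ∧ (∃ p q, IsPathFrom p q π) ∧ f = parikh π} =
        ⋃ ρ ∈ S, {f | ∃ π, InLang ρ π ∧ f = parikh π}) ∧
      (∀ ρ ∈ S, lpsLen ρ ≤ 2 * U.card * E.card) ∧
      (∀ ρ ∈ S, numCycles ρ ≤ E.card) := by
  classical
  have hfin0 := lps_set_finite E (2 * U.card * E.card) E.card
  have hfin : {ρ : LPS ν α | (∃ p q, IsLPSFrom E p q ρ) ∧
      lpsLen ρ ≤ 2 * U.card * E.card ∧ numCycles ρ ≤ E.card}.Finite := by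
    apply hfin0.subset
    rintro ρ ⟨⟨p, q, hρ⟩, h2, h3⟩
    exact ⟨hρ.1, h2, h3⟩
  refine ⟨hfin.toFinset, ?_, ?_, ?_, ?_⟩
  · intro ρ hρ
    exact ((Set.Finite.mem_toFinset _).1 hρ).1
  · apply Set.eq_of_subset_of_subset
    · -- hard direction
      rintro F ⟨π, hπE, ⟨p, q, hπ⟩, rfl⟩
      have hmem : ∀ e ∈ π, e.1 ∈ U ∧ e.2.2 ∈ U := fun e he => hE e (hπE e he)
      obtain ⟨π₀, hπ₀, hcount, htoF, hlen₀⟩ := exists_skeleton U hπ hmem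
      set D := π.toFinset with hD
      have hDπ : ∀ e ∈ π, e ∈ D := fun e he => List.mem_toFinset.2 he
      have hDmem : ∀ e ∈ D, e.1 ∈ U ∧ e.2.2 ∈ U := fun e he => hmem e (List.mem_toFinset.1 he)
      have hπ₀mem : ∀ e ∈ π₀, e ∈ π := by
        intro e he
        have h1 : 0 < π₀.count e := List.count_pos_iff.2 he
        exact List.count_pos_iff.1 (lt_of_lt_of_le h1 (hcount e))
      have hπ₀D : ∀ e ∈ π₀, e ∈ D := fun e he => hDπ e (hπ₀mem e he)
      set f := fun e => π.count e - π₀.count e with hf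
      have hdec : parikh π = fun e => f e + parikh π₀ e := by
        funext e
        have := hcount e
        simp only [parikh, hf]
        omega
      have hcircf : ∀ v, flowOut D f v = flowIn D f v := by
        intro v
        have h1 := flow_path (D := D) hDπ hπ v
        have h2 := flow_path (D := D) hπ₀D hπ₀ v
        have h3 : flowOut D (parikh π) v = flowOut D f v + flowOut D (parikh π₀) v := by
          rw [hdec, flowOut_add]
        have h4 : flowIn D (parikh π) v = flowIn D f v + flowIn D (parikh π₀) v := by
          rw [hdec, flowIn_add]
        omega
      have hsupp : ∀ e, 0 < f e → e ∈ D := by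
        intro e he
        simp only [hf] at he
        have : 0 < π.count e := by omega
        exact hDπ e (List.count_pos_iff.1 this)
      obtain ⟨cs, hsum, hcslen, hprops⟩ :=
        circulation_decomposition U D hDmem (D.filter (fun e => 0 < f e)).card f
          le_rfl hsupp hcircf
      have hD_le_E : D.card ≤ E.card :=
        Finset.card_le_card (fun e he => hπE e (List.mem_toFinset.1 he))
      have hfilter_le : (D.filter (fun e => 0 < f e)).card ≤ D.card :=
        Finset.card_le_card (Finset.filter_subset _ _)
      have hfπ₀ : ∀ e, 0 < f e → e ∈ π₀ := by
        intro e he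
        have heD := hsupp e he
        rw [← htoF] at heD
        exact List.mem_toFinset.1 heD
      have hanchor : ∀ s ∈ cs, s.1 ≠ [] ∧ (∃ r, IsPathFrom r r s.1) ∧
          ∃ e, e ∈ s.1 ∧ e ∈ π₀ := by
        intro s hs
        obtain ⟨h1, h2, h3, h4, h5⟩ := hprops s hs
        obtain ⟨e, he⟩ := List.exists_mem_of_ne_nil s.1 h1
        exact ⟨h1, h2, e, he, hfπ₀ e (h5 e he)⟩
      obtain ⟨ρ, es, b1, b2, b3, b4, b5, b6, b7, b8⟩ := build_lps π₀ p q hπ₀ cs hanchor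
      have hpar : ∀ x, (lpsWord ρ es).count x = π.count x := by
        intro x
        rw [b7 x, ← hsum x]
        have := hcount x
        simp only [hf]
        omega
      have hsupE : ∀ x ∈ lpsSupport ρ, x ∈ E := by
        intro x hx
        rcases b8 x hx with h | ⟨s, hs, h⟩
        · exact hπE x (hπ₀mem x h)
        · obtain ⟨-, -, -, -, h5⟩ := hprops s hs
          exact hπE x (hπ₀mem x (hfπ₀ x (h5 x h)))
      have hsumlen : (cs.map fun s => s.1.length).sum ≤ cs.length * U.card := by
        have := List.sum_le_card_nsmul (cs.map fun s => s.1.length) U.card (by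
          intro x hx
          rw [List.mem_map] at hx
          obtain ⟨s, hs, rfl⟩ := hx
          exact (hprops s hs).2.2.1)
        simpa using this
      have hcs_le_D : cs.length ≤ D.card := le_trans hcslen hfilter_le
      have hlenρ : lpsLen ρ ≤ 2 * U.card * E.card := by
        have hstep : lpsLen ρ ≤ 2 * U.card * D.card := by
          calc lpsLen ρ = π₀.length + (cs.map fun s => s.1.length).sum := b6
          _ ≤ U.card * D.card + cs.length * U.card := Nat.add_le_add hlen₀ hsumlen
          _ ≤ U.card * D.card + D.card * U.card :=
            Nat.add_le_add_left (Nat.mul_le_mul_right _ hcs_le_D) _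
          _ = 2 * U.card * D.card := by ring
        calc lpsLen ρ ≤ 2 * U.card * D.card := hstep
        _ ≤ 2 * U.card * E.card := Nat.mul_le_mul_left _ hD_le_E
      have hcycρ : numCycles ρ ≤ E.card := by
        have : numCycles ρ = cs.length := b2
        omega
      have hρS : ρ ∈ hfin.toFinset := by
        rw [Set.Finite.mem_toFinset]
        exact ⟨⟨p, q, hsupE, b3, b4⟩, hlenρ, hcycρ⟩
      apply Set.mem_iUnion₂.2
      refine ⟨ρ, hρS, lpsWord ρ es, ⟨es, b1, rfl⟩, ?_⟩
      funext x
      exact (hpar x).symm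
    · -- easy direction
      rintro F hF
      rw [Set.mem_iUnion₂] at hF
      obtain ⟨ρ, hρS, π', ⟨es, hlen, rfl⟩, rfl⟩ := hF
      obtain ⟨⟨p, q, hLPS⟩, -, -⟩ := (Set.Finite.mem_toFinset _).1 hρS
      exact ⟨lpsWord ρ es, fun e he => hLPS.1 e (mem_lps_word he),
        ⟨p, q, lps_word_path hLPS hlen⟩, rfl⟩
  · intro ρ hρ
    exact ((Set.Finite.mem_toFinset _).1 hρ).2.1
  · intro ρ hρ
    exact ((Set.Finite.mem_toFinset _).1 hρ).2.2

end LabeledGraph
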